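/- arXiv:2112.03147 — 2 statements merged into one kernel-verified Lean document; each statement's English description precedes it below -/
import Mathlib

section
/- For any partition λ with more than n parts, the Schur-Weierstrass polynomial σ_λ vanishes identically under the substitution x_i = p_i(u_1,...,u_n)/i: σ_λ(p_1, p_2/2, p_3/3, ...) = 0 as a polynomial in u_1, ..., u_n. -/
open MvPolynomial in
/-- The generating series `Σ_{i≥1} x_i t^i` with coefficients in `ℚ[x_1, x_2, …]`. -/
noncomputable def swGen : PowerSeries (MvPolynomial ℕ ℚ) :=
  PowerSeries.mk fun i => if i = 0 then 0 else MvPolynomial.X i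

/-- The elementary Schur–Weierstrass polynomial `σ_k`, i.e. the coefficient of `t^k`
in `exp (Σ_{i≥1} x_i t^i) = Σ_m (Σ x_i t^i)^m / m!` (the terms with `m > k` do not
contribute to the coefficient of `t^k`). -/
noncomputable def sw (k : ℕ) : MvPolynomial ℕ ℚ :=
  ∑ m ∈ Finset.range (k + 1),
    (Nat.factorial m : ℚ)⁻¹ • PowerSeries.coeff k (swGen ^ m)

/-- `σ_k` for integer index, with `σ_k = 0` for `k < 0`. -/
noncomputable def swZ (k : ℤ) : MvPolynomial ℕ ℚ :=
  if 0 ≤ k then sw k.toNat else 0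

/-- The Schur–Weierstrass polynomial `σ_λ = det (σ_{λ_i + j - i})_{1 ≤ i,j ≤ m}`. -/
noncomputable def swSchur {m : ℕ} (lam : Fin m → ℕ) : MvPolynomial ℕ ℚ :=
  Matrix.det (Matrix.of fun i j : Fin m => swZ ((lam i : ℤ) + (j : ℕ) - (i : ℕ)))

/-- Substitution `x_i ↦ p_i(u_1,…,u_n)/i`, where `p_i` is the `i`-th power sum. -/
noncomputable def powerSub (n : ℕ) : MvPolynomial ℕ ℚ →ₐ[ℚ] MvPolynomial (Fin n) ℚ :=
  MvPolynomial.aeval fun i : ℕ => ((i : ℚ))⁻¹ • MvPolynomial.psum (Fin n) ℚ i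


section SW11aux


set_option linter.unusedSectionVars false
namespace SW11

open PowerSeries

variable {R : Type*} [CommRing R] [Algebra ℚ R]

/-- Coefficient-wise exponential of a power series with zero constant term. -/
noncomputable def expC (G : PowerSeries R) : PowerSeries R :=
  PowerSeries.mk fun k => ∑ m ∈ Finset.range (k + 1),
    (Nat.factorial m : ℚ)⁻¹ • PowerSeries.coeff k (G ^ m)

theorem coeff_pow_eq_zero {G : PowerSeries R} (hG : constantCoeff G = 0)
    {k m : ℕ} (h : k < m) : coeff k (G ^ m) = 0 :=
  X_pow_dvd_iff.mp (pow_dvd_pow_of_dvd (X_dvd_iff.mpr hG) m) k h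

theorem coeff_expC {G : R⟦X⟧} (hG : constantCoeff G = 0) (k B : ℕ) (hB : k < B) :
    coeff k (expC G) = ∑ m ∈ Finset.range B,
      (Nat.factorial m : ℚ)⁻¹ • coeff k (G ^ m) := by
  rw [expC, coeff_mk]
  refine Finset.sum_subset (Finset.range_subset_range.mpr hB) fun m _ hm => ?_
  rw [coeff_pow_eq_zero hG (by simp only [Finset.mem_range] at hm ⊢; omega), smul_zero]

theorem expC_deriv {G : R⟦X⟧} (hG : constantCoeff G = 0) :
    d⁄dX R (expC G) = expC G * d⁄dX R G := by
  ext k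
  rw [coeff_derivative, coeff_expC hG (k+1) (k+2) (by omega), Finset.sum_mul,
    Finset.sum_range_succ']
  have h0 : ((Nat.factorial 0 : ℚ)⁻¹ • coeff (k+1) ((G:R⟦X⟧) ^ 0)) * ((k:R) + 1) = 0 := by
    simp
  rw [h0, add_zero]
  have hterm : ∀ a : ℕ, ((Nat.factorial (a+1) : ℚ)⁻¹ • coeff (k+1) (G ^ (a+1))) * ((k:R)+1)
      = (Nat.factorial a : ℚ)⁻¹ • coeff k (G ^ a * d⁄dX R G) := by
    intro a
    have h2 : d⁄dX R (G ^ (a+1)) = (a+1) • (G ^ a * d⁄dX R G) := by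
      rw [Derivation.leibniz_pow]
      simp [smul_eq_mul]
    have h1 : coeff (k+1) (G^(a+1)) * ((k:R)+1) = (a+1 : ℕ) • coeff k (G ^ a * d⁄dX R G) := by
      rw [← map_nsmul, ← h2, coeff_derivative]
    rw [smul_mul_assoc, h1, ← Nat.cast_smul_eq_nsmul ℚ, smul_smul]
    congr 1
    have : ((Nat.factorial (a+1) : ℚ)) ≠ 0 := Nat.cast_ne_zero.mpr (Nat.factorial_ne_zero _)
    have h3 : (Nat.factorial a : ℚ) ≠ 0 := Nat.cast_ne_zero.mpr (Nat.factorial_ne_zero _)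
    rw [Nat.factorial_succ]
    push_cast
    field_simp
  rw [Finset.sum_congr rfl fun a _ => hterm a, coeff_mul]
  have hsplit : ∀ pq ∈ Finset.HasAntidiagonal.antidiagonal k,
      coeff pq.1 (expC G) * coeff pq.2 (d⁄dX R G)
      = ∑ a ∈ Finset.range (k+1),
          (Nat.factorial a : ℚ)⁻¹ • (coeff pq.1 (G^a) * coeff pq.2 (d⁄dX R G)) := by
    intro pq hpq
    have : pq.1 ≤ k := Finset.HasAntidiagonal.antidiagonal.fst_le hpq
    rw [coeff_expC hG pq.1 (k+1) (by omega), Finset.sum_mul]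
    simp_rw [smul_mul_assoc]
  rw [Finset.sum_congr rfl hsplit, Finset.sum_comm]
  refine Finset.sum_congr rfl fun a _ => ?_
  rw [← Finset.smul_sum, ← coeff_mul]

/-- geometric series -/
noncomputable def geom (a : R) : R⟦X⟧ := PowerSeries.mk fun i => a ^ i
noncomputable def gser (a : R) : R⟦X⟧ := PowerSeries.mk fun i => a ^ (i+1)

theorem onesub_mul_geom (a : R) : (1 - C a * X) * geom a = 1 := by
  ext k
  cases k with
  | zero => simp [geom, coeff_zero_eq_constantCoeff, map_sub, map_mul]
  | succ k =>
      rw [sub_mul, one_mul, map_sub, mul_assoc, coeff_C_mul, coeff_succ_X_mul]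
      simp [geom, coeff_one, pow_succ']

theorem gser_eq (a : R) : gser a = C a * geom a := by
  ext k
  rw [coeff_C_mul]
  simp [gser, geom, pow_succ']

theorem onesub_mul_gser (a : R) : (1 - C a * X) * gser a = C a := by
  rw [gser_eq, mul_left_comm, onesub_mul_geom, mul_one]

theorem coeff_onesub_mul (a : R) (f : R⟦X⟧) (k : ℕ) :
    coeff (k+1) ((1 - C a * X) * f) = coeff (k+1) f - a * coeff k f := by
  rw [sub_mul, one_mul, map_sub, mul_assoc, coeff_C_mul, coeff_succ_X_mul]

theorem coeff_prod_onesub {ι : Type*} [DecidableEq ι] (s : Finset ι) (a : ι → R) :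
    ∀ k, s.card < k → coeff k (∏ j ∈ s, (1 - C (a j) * X)) = 0 := by
  induction s using Finset.induction_on with
  | empty =>
      intro k hk
      rw [Finset.prod_empty, coeff_one, if_neg (by omega)]
  | @insert i s hi ih =>
      intro k hk
      rw [Finset.card_insert_of_notMem hi] at hk
      obtain ⟨k', rfl⟩ : ∃ k', k = k' + 1 := ⟨k - 1, by omega⟩
      rw [Finset.prod_insert hi, coeff_onesub_mul, ih _ (by omega), ih _ (by omega),
        mul_zero, sub_zero]

theorem deriv_prod_onesub {ι : Type*} [DecidableEq ι] (s : Finset ι) (a : ι → R) :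
    d⁄dX R (∏ j ∈ s, (1 - C (a j) * X))
      = -(∏ j ∈ s, (1 - C (a j) * X)) * ∑ j ∈ s, gser (a j) := by
  induction s using Finset.induction_on with
  | empty => simp
  | @insert i s hi ih =>
      rw [Finset.prod_insert hi, Finset.sum_insert hi, Derivation.leibniz,
        smul_eq_mul, smul_eq_mul, ih]
      have hD : d⁄dX R (1 - C (a i) * X) = - C (a i) := by
        rw [map_sub, Derivation.leibniz, derivative_X, derivative_C]
        simp
      rw [hD]
      linear_combination (∏ j ∈ s, (1 - C (a j) * X)) * onesub_mul_gser (a i)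

end SW11

-- CONCRETE PART

namespace SW11
open PowerSeries

variable (n : ℕ)

noncomputable def En (n : ℕ) : PowerSeries (MvPolynomial (Fin n) ℚ) :=
  ∏ j : Fin n, (1 - C (MvPolynomial.X j) * X)

noncomputable def Gn (n : ℕ) : PowerSeries (MvPolynomial (Fin n) ℚ) :=
  PowerSeries.map (powerSub n).toRingHom swGen

noncomputable def Hn (n : ℕ) : PowerSeries (MvPolynomial (Fin n) ℚ) := expC (Gn n)

theorem coeff_Gn (i : ℕ) :
    coeff i (Gn n) = if i = 0 then 0 else ((i:ℚ))⁻¹ • MvPolynomial.psum (Fin n) ℚ i := by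
  rw [Gn, coeff_map, swGen, coeff_mk]
  split_ifs with h
  · simp
  · simp [powerSub]

theorem constantCoeff_Gn : constantCoeff (Gn n) = 0 := by
  rw [← coeff_zero_eq_constantCoeff_apply, coeff_Gn, if_pos rfl]

theorem coeff_Hn (k : ℕ) : coeff k (Hn n) = powerSub n (sw k) := by
  rw [Hn, expC, coeff_mk, sw, map_sum]
  refine Finset.sum_congr rfl fun m _ => ?_
  rw [map_smul]
  congr 1
  rw [Gn, ← map_pow, coeff_map]
  rfl

theorem deriv_Gn : d⁄dX (MvPolynomial (Fin n) ℚ) (Gn n) = ∑ j : Fin n, gser (MvPolynomial.X j) := by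
  refine PowerSeries.ext fun k => ?_
  rw [coeff_derivative, coeff_Gn, if_neg (Nat.succ_ne_zero k), map_sum]
  have hcast : ((k : MvPolynomial (Fin n) ℚ) + 1)
      = algebraMap ℚ (MvPolynomial (Fin n) ℚ) (((k+1:ℕ)):ℚ) := by
    rw [map_natCast]; push_cast; ring
  rw [hcast, mul_comm, ← Algebra.smul_def, smul_smul,
    mul_inv_cancel₀ (Nat.cast_ne_zero.mpr (Nat.succ_ne_zero k)), one_smul]
  simp only [MvPolynomial.psum]
  refine Finset.sum_congr rfl fun j _ => ?_
  rw [gser, coeff_mk]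

theorem constantCoeff_En : constantCoeff (En n) = 1 := by
  rw [En, map_prod]
  refine Finset.prod_eq_one fun j _ => ?_
  simp

theorem constantCoeff_Hn : constantCoeff (Hn n) = 1 := by
  rw [← coeff_zero_eq_constantCoeff_apply, Hn, expC, coeff_mk]
  simp

theorem En_mul_Hn : En n * Hn n = 1 := by
  apply PowerSeries.derivative.ext
  · rw [Derivation.leibniz, Hn, expC_deriv (constantCoeff_Gn n), ← Hn, deriv_Gn, En,
      deriv_prod_onesub, Derivation.map_one_eq_zero, smul_eq_mul, smul_eq_mul]
    ring
  · rw [map_mul, constantCoeff_En, constantCoeff_Hn, map_one, one_mul]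

theorem coeff_En_gt {k : ℕ} (hk : n < k) : coeff k (En n) = 0 := by
  rw [En]
  exact coeff_prod_onesub Finset.univ _ k (by simpa using hk)

/-- substituted `swZ` -/
noncomputable def hZ (n : ℕ) (z : ℤ) : MvPolynomial (Fin n) ℚ :=
  if 0 ≤ z then coeff z.toNat (Hn n) else 0

theorem powerSub_swZ (z : ℤ) : powerSub n (swZ z) = hZ n z := by
  rw [swZ, hZ]
  split_ifs
  · rw [coeff_Hn]
  · rw [map_zero]

theorem sumrel (N B : ℕ) (hN : 1 ≤ N) (hB : n < B) :
    ∑ k ∈ Finset.range B, coeff k (En n) * hZ n ((N:ℤ) - k) = 0 := by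
  set f : ℕ → MvPolynomial (Fin n) ℚ := fun k => coeff k (En n) * hZ n ((N:ℤ) - k) with hf
  have h1 : ∑ k ∈ Finset.range B, f k = ∑ k ∈ Finset.range (max B (N+1)), f k := by
    refine Finset.sum_subset (Finset.range_subset_range.mpr (le_max_left _ _)) fun k _ hk => ?_
    have hk' : n < k := by simp only [Finset.mem_range] at hk; omega
    rw [hf]; dsimp only; rw [coeff_En_gt n hk', zero_mul]
  have h2 : ∑ k ∈ Finset.range (N+1), f k = ∑ k ∈ Finset.range (max B (N+1)), f k := by
    refine Finset.sum_subset (Finset.range_subset_range.mpr (le_max_right _ _)) fun k _ hk => ?_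
    have hk' : N < k := by simp only [Finset.mem_range] at hk; omega
    rw [hf]; dsimp only; rw [hZ, if_neg (by omega), mul_zero]
  have h3 : ∑ k ∈ Finset.range (N+1), f k = coeff N (En n * Hn n) := by
    rw [coeff_mul, Finset.Nat.sum_antidiagonal_eq_sum_range_succ_mk]
    refine Finset.sum_congr rfl fun k hk => ?_
    have hk' : k ≤ N := by simp only [Finset.mem_range] at hk; omega
    rw [hf]; dsimp only
    have ht : ((N:ℤ) - k).toNat = N - k := by omega
    rw [hZ, if_pos (by omega), ht]
  rw [h1, ← h2, h3, En_mul_Hn, coeff_one, if_neg (by omega)]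

end SW11


end SW11aux

/-- If the partition `λ` has more than `n` parts, then `σ_λ` vanishes
identically under the substitution `x_i ↦ p_i(u_1,…,u_n)/i`. -/
theorem stmt_11 (n m : ℕ) (lam : Fin m → ℕ) (hdec : Antitone lam)
    (hpos : ∀ i, 0 < lam i) (hmn : n < m) :
    powerSub n (swSchur lam) = 0 := by
  classical
  open SW11 PowerSeries in
  have hdet : powerSub n (swSchur lam)
      = ((Matrix.of fun i j : Fin m => swZ ((lam i : ℤ) + (j : ℕ) - (i : ℕ))).map
          (powerSub n)).det := by
    rw [swSchur]
    exact RingHom.map_det (powerSub n).toRingHom _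
  rw [hdet, ← Matrix.exists_mulVec_eq_zero_iff]
  refine ⟨fun j => PowerSeries.coeff (m - 1 - (j:ℕ)) (SW11.En n), ?_, ?_⟩
  · intro hv
    have := congrFun hv ⟨m - 1, by omega⟩
    simp only [Pi.zero_apply] at this
    rw [show m - 1 - ((⟨m-1, by omega⟩ : Fin m) : ℕ) = 0 by simp,
      PowerSeries.coeff_zero_eq_constantCoeff_apply, SW11.constantCoeff_En] at this
    exact one_ne_zero this
  · funext i
    set N : ℕ := lam i + (m - 1 - (i:ℕ)) with hN
    have hNi : 1 ≤ N := by have := hpos i; omega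
    have hiu : (i:ℕ) ≤ m - 1 := by omega
    set F : ℕ → MvPolynomial (Fin n) ℚ := fun t =>
      SW11.hZ n ((lam i : ℤ) + t - (i:ℕ)) * PowerSeries.coeff (m - 1 - t) (SW11.En n) with hF
    have hentry : ∀ j : Fin m,
        ((Matrix.of fun i j : Fin m => swZ ((lam i : ℤ) + (j : ℕ) - (i : ℕ))).map
          (powerSub n)) i j * PowerSeries.coeff (m - 1 - (j:ℕ)) (SW11.En n) = F (j:ℕ) := by
      intro j
      rw [Matrix.map_apply, Matrix.of_apply, SW11.powerSub_swZ, hF]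
    rw [Matrix.mulVec, Pi.zero_apply]
    unfold dotProduct
    calc ∑ j : Fin m, ((Matrix.of fun i j : Fin m => swZ ((lam i : ℤ) + (j : ℕ) - (i : ℕ))).map
          (powerSub n)) i j * PowerSeries.coeff (m - 1 - (j:ℕ)) (SW11.En n)
        = ∑ j : Fin m, F (j:ℕ) := Finset.sum_congr rfl fun j _ => hentry j
      _ = ∑ t ∈ Finset.range m, F t := Fin.sum_univ_eq_sum_range F m
      _ = ∑ k ∈ Finset.range m, F (m - 1 - k) := (Finset.sum_range_reflect F m).symm
      _ = ∑ k ∈ Finset.range m, PowerSeries.coeff k (SW11.En n) * SW11.hZ n ((N:ℤ) - k) := by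
          refine Finset.sum_congr rfl fun k hk => ?_
          have hk' : k < m := Finset.mem_range.mp hk
          have e1 : m - 1 - (m - 1 - k) = k := by omega
          have e2 : (lam i : ℤ) + ((m - 1 - k : ℕ) : ℤ) - ((i:Fin m):ℕ) = (N:ℤ) - k := by
            omega
          rw [hF]; dsimp only
          rw [mul_comm, e1, e2]
      _ = 0 := SW11.sumrel n N m hNi hmn
end

section
/- With σ_λ the Schur-Weierstrass polynomial for λ = (4,1,1,1), one has 252·σ_{(4,1,1,1)}(x_1, x_2, x_3, ..., x_7, ...) = x_1^7 + 21 x_1^4 x_3 - 84 x_1^3 x_2^2 + 252 x_2^2 x_3 + 252 x_1 x_3^2 - 252 x_7; in particular σ_{(4,1,1,1)} depends only on the variables x_1, x_2, x_3, x_7. -/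
open MvPolynomial

lemma coeff_swGen (n : ℕ) :
    PowerSeries.coeff n swGen = if n = 0 then 0 else X n := by
  simp [swGen]

lemma cp_1_0 : PowerSeries.coeff 0 (swGen ^ 1) = 0 := by
  rw [pow_one, coeff_swGen]; norm_num

lemma cp_1_1 : PowerSeries.coeff 1 (swGen ^ 1) = X 1 := by
  rw [pow_one, coeff_swGen]; norm_num

lemma cp_1_2 : PowerSeries.coeff 2 (swGen ^ 1) = X 2 := by
  rw [pow_one, coeff_swGen]; norm_num

lemma cp_1_3 : PowerSeries.coeff 3 (swGen ^ 1) = X 3 := by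
  rw [pow_one, coeff_swGen]; norm_num

lemma cp_1_4 : PowerSeries.coeff 4 (swGen ^ 1) = X 4 := by
  rw [pow_one, coeff_swGen]; norm_num

lemma cp_1_5 : PowerSeries.coeff 5 (swGen ^ 1) = X 5 := by
  rw [pow_one, coeff_swGen]; norm_num

lemma cp_1_6 : PowerSeries.coeff 6 (swGen ^ 1) = X 6 := by
  rw [pow_one, coeff_swGen]; norm_num

lemma cp_1_7 : PowerSeries.coeff 7 (swGen ^ 1) = X 7 := by
  rw [pow_one, coeff_swGen]; norm_num

lemma cp_2_0 : PowerSeries.coeff 0 (swGen ^ 2) = 0 := by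
  rw [pow_succ, PowerSeries.coeff_mul, Finset.Nat.sum_antidiagonal_eq_sum_range_succ_mk]
  simp only [Finset.sum_range_succ, Finset.sum_range_zero, cp_1_0]
  norm_num [coeff_swGen]
  try ring

lemma cp_2_1 : PowerSeries.coeff 1 (swGen ^ 2) = 0 := by
  rw [pow_succ, PowerSeries.coeff_mul, Finset.Nat.sum_antidiagonal_eq_sum_range_succ_mk]
  simp only [Finset.sum_range_succ, Finset.sum_range_zero, cp_1_0, cp_1_1]
  norm_num [coeff_swGen]
  try ring

lemma cp_2_2 : PowerSeries.coeff 2 (swGen ^ 2) = X 1 ^ 2 := by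
  rw [pow_succ, PowerSeries.coeff_mul, Finset.Nat.sum_antidiagonal_eq_sum_range_succ_mk]
  simp only [Finset.sum_range_succ, Finset.sum_range_zero, cp_1_0, cp_1_1, cp_1_2]
  norm_num [coeff_swGen]
  try ring

lemma cp_2_3 : PowerSeries.coeff 3 (swGen ^ 2) = 2 * X 1 * X 2 := by
  rw [pow_succ, PowerSeries.coeff_mul, Finset.Nat.sum_antidiagonal_eq_sum_range_succ_mk]
  simp only [Finset.sum_range_succ, Finset.sum_range_zero, cp_1_0, cp_1_1, cp_1_2, cp_1_3]
  norm_num [coeff_swGen]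
  try ring

lemma cp_2_4 : PowerSeries.coeff 4 (swGen ^ 2) = X 2 ^ 2 + 2 * X 1 * X 3 := by
  rw [pow_succ, PowerSeries.coeff_mul, Finset.Nat.sum_antidiagonal_eq_sum_range_succ_mk]
  simp only [Finset.sum_range_succ, Finset.sum_range_zero, cp_1_0, cp_1_1, cp_1_2, cp_1_3, cp_1_4]
  norm_num [coeff_swGen]
  try ring

lemma cp_2_5 : PowerSeries.coeff 5 (swGen ^ 2) = 2 * X 2 * X 3 + 2 * X 1 * X 4 := by
  rw [pow_succ, PowerSeries.coeff_mul, Finset.Nat.sum_antidiagonal_eq_sum_range_succ_mk]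
  simp only [Finset.sum_range_succ, Finset.sum_range_zero, cp_1_0, cp_1_1, cp_1_2, cp_1_3, cp_1_4, cp_1_5]
  norm_num [coeff_swGen]
  try ring

lemma cp_2_6 : PowerSeries.coeff 6 (swGen ^ 2) = X 3 ^ 2 + 2 * X 2 * X 4 + 2 * X 1 * X 5 := by
  rw [pow_succ, PowerSeries.coeff_mul, Finset.Nat.sum_antidiagonal_eq_sum_range_succ_mk]
  simp only [Finset.sum_range_succ, Finset.sum_range_zero, cp_1_0, cp_1_1, cp_1_2, cp_1_3, cp_1_4, cp_1_5, cp_1_6]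
  norm_num [coeff_swGen]
  try ring

lemma cp_2_7 : PowerSeries.coeff 7 (swGen ^ 2) = 2 * X 3 * X 4 + 2 * X 2 * X 5 + 2 * X 1 * X 6 := by
  rw [pow_succ, PowerSeries.coeff_mul, Finset.Nat.sum_antidiagonal_eq_sum_range_succ_mk]
  simp only [Finset.sum_range_succ, Finset.sum_range_zero, cp_1_0, cp_1_1, cp_1_2, cp_1_3, cp_1_4, cp_1_5, cp_1_6, cp_1_7]
  norm_num [coeff_swGen]
  try ring

lemma cp_3_0 : PowerSeries.coeff 0 (swGen ^ 3) = 0 := by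
  rw [pow_succ, PowerSeries.coeff_mul, Finset.Nat.sum_antidiagonal_eq_sum_range_succ_mk]
  simp only [Finset.sum_range_succ, Finset.sum_range_zero, cp_2_0]
  norm_num [coeff_swGen]
  try ring

lemma cp_3_1 : PowerSeries.coeff 1 (swGen ^ 3) = 0 := by
  rw [pow_succ, PowerSeries.coeff_mul, Finset.Nat.sum_antidiagonal_eq_sum_range_succ_mk]
  simp only [Finset.sum_range_succ, Finset.sum_range_zero, cp_2_0, cp_2_1]
  norm_num [coeff_swGen]
  try ring

lemma cp_3_2 : PowerSeries.coeff 2 (swGen ^ 3) = 0 := by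
  rw [pow_succ, PowerSeries.coeff_mul, Finset.Nat.sum_antidiagonal_eq_sum_range_succ_mk]
  simp only [Finset.sum_range_succ, Finset.sum_range_zero, cp_2_0, cp_2_1, cp_2_2]
  norm_num [coeff_swGen]
  try ring

lemma cp_3_3 : PowerSeries.coeff 3 (swGen ^ 3) = X 1 ^ 3 := by
  rw [pow_succ, PowerSeries.coeff_mul, Finset.Nat.sum_antidiagonal_eq_sum_range_succ_mk]
  simp only [Finset.sum_range_succ, Finset.sum_range_zero, cp_2_0, cp_2_1, cp_2_2, cp_2_3]
  norm_num [coeff_swGen]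
  try ring

lemma cp_3_4 : PowerSeries.coeff 4 (swGen ^ 3) = 3 * X 1 ^ 2 * X 2 := by
  rw [pow_succ, PowerSeries.coeff_mul, Finset.Nat.sum_antidiagonal_eq_sum_range_succ_mk]
  simp only [Finset.sum_range_succ, Finset.sum_range_zero, cp_2_0, cp_2_1, cp_2_2, cp_2_3, cp_2_4]
  norm_num [coeff_swGen]
  try ring

lemma cp_3_5 : PowerSeries.coeff 5 (swGen ^ 3) = 3 * X 1 * X 2 ^ 2 + 3 * X 1 ^ 2 * X 3 := by
  rw [pow_succ, PowerSeries.coeff_mul, Finset.Nat.sum_antidiagonal_eq_sum_range_succ_mk]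
  simp only [Finset.sum_range_succ, Finset.sum_range_zero, cp_2_0, cp_2_1, cp_2_2, cp_2_3, cp_2_4, cp_2_5]
  norm_num [coeff_swGen]
  try ring

lemma cp_3_6 : PowerSeries.coeff 6 (swGen ^ 3) = X 2 ^ 3 + 6 * X 1 * X 2 * X 3 + 3 * X 1 ^ 2 * X 4 := by
  rw [pow_succ, PowerSeries.coeff_mul, Finset.Nat.sum_antidiagonal_eq_sum_range_succ_mk]
  simp only [Finset.sum_range_succ, Finset.sum_range_zero, cp_2_0, cp_2_1, cp_2_2, cp_2_3, cp_2_4, cp_2_5, cp_2_6]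
  norm_num [coeff_swGen]
  try ring

lemma cp_3_7 : PowerSeries.coeff 7 (swGen ^ 3) = 3 * X 2 ^ 2 * X 3 + 3 * X 1 * X 3 ^ 2 + 6 * X 1 * X 2 * X 4 + 3 * X 1 ^ 2 * X 5 := by
  rw [pow_succ, PowerSeries.coeff_mul, Finset.Nat.sum_antidiagonal_eq_sum_range_succ_mk]
  simp only [Finset.sum_range_succ, Finset.sum_range_zero, cp_2_0, cp_2_1, cp_2_2, cp_2_3, cp_2_4, cp_2_5, cp_2_6, cp_2_7]
  norm_num [coeff_swGen]
  try ring

lemma cp_4_0 : PowerSeries.coeff 0 (swGen ^ 4) = 0 := by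
  rw [pow_succ, PowerSeries.coeff_mul, Finset.Nat.sum_antidiagonal_eq_sum_range_succ_mk]
  simp only [Finset.sum_range_succ, Finset.sum_range_zero, cp_3_0]
  norm_num [coeff_swGen]
  try ring

lemma cp_4_1 : PowerSeries.coeff 1 (swGen ^ 4) = 0 := by
  rw [pow_succ, PowerSeries.coeff_mul, Finset.Nat.sum_antidiagonal_eq_sum_range_succ_mk]
  simp only [Finset.sum_range_succ, Finset.sum_range_zero, cp_3_0, cp_3_1]
  norm_num [coeff_swGen]
  try ring

lemma cp_4_2 : PowerSeries.coeff 2 (swGen ^ 4) = 0 := by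
  rw [pow_succ, PowerSeries.coeff_mul, Finset.Nat.sum_antidiagonal_eq_sum_range_succ_mk]
  simp only [Finset.sum_range_succ, Finset.sum_range_zero, cp_3_0, cp_3_1, cp_3_2]
  norm_num [coeff_swGen]
  try ring

lemma cp_4_3 : PowerSeries.coeff 3 (swGen ^ 4) = 0 := by
  rw [pow_succ, PowerSeries.coeff_mul, Finset.Nat.sum_antidiagonal_eq_sum_range_succ_mk]
  simp only [Finset.sum_range_succ, Finset.sum_range_zero, cp_3_0, cp_3_1, cp_3_2, cp_3_3]
  norm_num [coeff_swGen]
  try ring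

lemma cp_4_4 : PowerSeries.coeff 4 (swGen ^ 4) = X 1 ^ 4 := by
  rw [pow_succ, PowerSeries.coeff_mul, Finset.Nat.sum_antidiagonal_eq_sum_range_succ_mk]
  simp only [Finset.sum_range_succ, Finset.sum_range_zero, cp_3_0, cp_3_1, cp_3_2, cp_3_3, cp_3_4]
  norm_num [coeff_swGen]
  try ring

lemma cp_4_5 : PowerSeries.coeff 5 (swGen ^ 4) = 4 * X 1 ^ 3 * X 2 := by
  rw [pow_succ, PowerSeries.coeff_mul, Finset.Nat.sum_antidiagonal_eq_sum_range_succ_mk]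
  simp only [Finset.sum_range_succ, Finset.sum_range_zero, cp_3_0, cp_3_1, cp_3_2, cp_3_3, cp_3_4, cp_3_5]
  norm_num [coeff_swGen]
  try ring

lemma cp_4_6 : PowerSeries.coeff 6 (swGen ^ 4) = 6 * X 1 ^ 2 * X 2 ^ 2 + 4 * X 1 ^ 3 * X 3 := by
  rw [pow_succ, PowerSeries.coeff_mul, Finset.Nat.sum_antidiagonal_eq_sum_range_succ_mk]
  simp only [Finset.sum_range_succ, Finset.sum_range_zero, cp_3_0, cp_3_1, cp_3_2, cp_3_3, cp_3_4, cp_3_5, cp_3_6]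
  norm_num [coeff_swGen]
  try ring

lemma cp_4_7 : PowerSeries.coeff 7 (swGen ^ 4) = 4 * X 1 * X 2 ^ 3 + 12 * X 1 ^ 2 * X 2 * X 3 + 4 * X 1 ^ 3 * X 4 := by
  rw [pow_succ, PowerSeries.coeff_mul, Finset.Nat.sum_antidiagonal_eq_sum_range_succ_mk]
  simp only [Finset.sum_range_succ, Finset.sum_range_zero, cp_3_0, cp_3_1, cp_3_2, cp_3_3, cp_3_4, cp_3_5, cp_3_6, cp_3_7]
  norm_num [coeff_swGen]
  try ring

lemma cp_5_0 : PowerSeries.coeff 0 (swGen ^ 5) = 0 := by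
  rw [pow_succ, PowerSeries.coeff_mul, Finset.Nat.sum_antidiagonal_eq_sum_range_succ_mk]
  simp only [Finset.sum_range_succ, Finset.sum_range_zero, cp_4_0]
  norm_num [coeff_swGen]
  try ring

lemma cp_5_1 : PowerSeries.coeff 1 (swGen ^ 5) = 0 := by
  rw [pow_succ, PowerSeries.coeff_mul, Finset.Nat.sum_antidiagonal_eq_sum_range_succ_mk]
  simp only [Finset.sum_range_succ, Finset.sum_range_zero, cp_4_0, cp_4_1]
  norm_num [coeff_swGen]
  try ring

lemma cp_5_2 : PowerSeries.coeff 2 (swGen ^ 5) = 0 := by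
  rw [pow_succ, PowerSeries.coeff_mul, Finset.Nat.sum_antidiagonal_eq_sum_range_succ_mk]
  simp only [Finset.sum_range_succ, Finset.sum_range_zero, cp_4_0, cp_4_1, cp_4_2]
  norm_num [coeff_swGen]
  try ring

lemma cp_5_3 : PowerSeries.coeff 3 (swGen ^ 5) = 0 := by
  rw [pow_succ, PowerSeries.coeff_mul, Finset.Nat.sum_antidiagonal_eq_sum_range_succ_mk]
  simp only [Finset.sum_range_succ, Finset.sum_range_zero, cp_4_0, cp_4_1, cp_4_2, cp_4_3]
  norm_num [coeff_swGen]
  try ring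

lemma cp_5_4 : PowerSeries.coeff 4 (swGen ^ 5) = 0 := by
  rw [pow_succ, PowerSeries.coeff_mul, Finset.Nat.sum_antidiagonal_eq_sum_range_succ_mk]
  simp only [Finset.sum_range_succ, Finset.sum_range_zero, cp_4_0, cp_4_1, cp_4_2, cp_4_3, cp_4_4]
  norm_num [coeff_swGen]
  try ring

lemma cp_5_5 : PowerSeries.coeff 5 (swGen ^ 5) = X 1 ^ 5 := by
  rw [pow_succ, PowerSeries.coeff_mul, Finset.Nat.sum_antidiagonal_eq_sum_range_succ_mk]
  simp only [Finset.sum_range_succ, Finset.sum_range_zero, cp_4_0, cp_4_1, cp_4_2, cp_4_3, cp_4_4, cp_4_5]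
  norm_num [coeff_swGen]
  try ring

lemma cp_5_6 : PowerSeries.coeff 6 (swGen ^ 5) = 5 * X 1 ^ 4 * X 2 := by
  rw [pow_succ, PowerSeries.coeff_mul, Finset.Nat.sum_antidiagonal_eq_sum_range_succ_mk]
  simp only [Finset.sum_range_succ, Finset.sum_range_zero, cp_4_0, cp_4_1, cp_4_2, cp_4_3, cp_4_4, cp_4_5, cp_4_6]
  norm_num [coeff_swGen]
  try ring

lemma cp_5_7 : PowerSeries.coeff 7 (swGen ^ 5) = 10 * X 1 ^ 3 * X 2 ^ 2 + 5 * X 1 ^ 4 * X 3 := by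
  rw [pow_succ, PowerSeries.coeff_mul, Finset.Nat.sum_antidiagonal_eq_sum_range_succ_mk]
  simp only [Finset.sum_range_succ, Finset.sum_range_zero, cp_4_0, cp_4_1, cp_4_2, cp_4_3, cp_4_4, cp_4_5, cp_4_6, cp_4_7]
  norm_num [coeff_swGen]
  try ring

lemma cp_6_0 : PowerSeries.coeff 0 (swGen ^ 6) = 0 := by
  rw [pow_succ, PowerSeries.coeff_mul, Finset.Nat.sum_antidiagonal_eq_sum_range_succ_mk]
  simp only [Finset.sum_range_succ, Finset.sum_range_zero, cp_5_0]
  norm_num [coeff_swGen]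
  try ring

lemma cp_6_1 : PowerSeries.coeff 1 (swGen ^ 6) = 0 := by
  rw [pow_succ, PowerSeries.coeff_mul, Finset.Nat.sum_antidiagonal_eq_sum_range_succ_mk]
  simp only [Finset.sum_range_succ, Finset.sum_range_zero, cp_5_0, cp_5_1]
  norm_num [coeff_swGen]
  try ring

lemma cp_6_2 : PowerSeries.coeff 2 (swGen ^ 6) = 0 := by
  rw [pow_succ, PowerSeries.coeff_mul, Finset.Nat.sum_antidiagonal_eq_sum_range_succ_mk]
  simp only [Finset.sum_range_succ, Finset.sum_range_zero, cp_5_0, cp_5_1, cp_5_2]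
  norm_num [coeff_swGen]
  try ring

lemma cp_6_3 : PowerSeries.coeff 3 (swGen ^ 6) = 0 := by
  rw [pow_succ, PowerSeries.coeff_mul, Finset.Nat.sum_antidiagonal_eq_sum_range_succ_mk]
  simp only [Finset.sum_range_succ, Finset.sum_range_zero, cp_5_0, cp_5_1, cp_5_2, cp_5_3]
  norm_num [coeff_swGen]
  try ring

lemma cp_6_4 : PowerSeries.coeff 4 (swGen ^ 6) = 0 := by
  rw [pow_succ, PowerSeries.coeff_mul, Finset.Nat.sum_antidiagonal_eq_sum_range_succ_mk]
  simp only [Finset.sum_range_succ, Finset.sum_range_zero, cp_5_0, cp_5_1, cp_5_2, cp_5_3, cp_5_4]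
  norm_num [coeff_swGen]
  try ring

lemma cp_6_5 : PowerSeries.coeff 5 (swGen ^ 6) = 0 := by
  rw [pow_succ, PowerSeries.coeff_mul, Finset.Nat.sum_antidiagonal_eq_sum_range_succ_mk]
  simp only [Finset.sum_range_succ, Finset.sum_range_zero, cp_5_0, cp_5_1, cp_5_2, cp_5_3, cp_5_4, cp_5_5]
  norm_num [coeff_swGen]
  try ring

lemma cp_6_6 : PowerSeries.coeff 6 (swGen ^ 6) = X 1 ^ 6 := by
  rw [pow_succ, PowerSeries.coeff_mul, Finset.Nat.sum_antidiagonal_eq_sum_range_succ_mk]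
  simp only [Finset.sum_range_succ, Finset.sum_range_zero, cp_5_0, cp_5_1, cp_5_2, cp_5_3, cp_5_4, cp_5_5, cp_5_6]
  norm_num [coeff_swGen]
  try ring

lemma cp_6_7 : PowerSeries.coeff 7 (swGen ^ 6) = 6 * X 1 ^ 5 * X 2 := by
  rw [pow_succ, PowerSeries.coeff_mul, Finset.Nat.sum_antidiagonal_eq_sum_range_succ_mk]
  simp only [Finset.sum_range_succ, Finset.sum_range_zero, cp_5_0, cp_5_1, cp_5_2, cp_5_3, cp_5_4, cp_5_5, cp_5_6, cp_5_7]
  norm_num [coeff_swGen]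
  try ring

lemma cp_7_0 : PowerSeries.coeff 0 (swGen ^ 7) = 0 := by
  rw [pow_succ, PowerSeries.coeff_mul, Finset.Nat.sum_antidiagonal_eq_sum_range_succ_mk]
  simp only [Finset.sum_range_succ, Finset.sum_range_zero, cp_6_0]
  norm_num [coeff_swGen]
  try ring

lemma cp_7_1 : PowerSeries.coeff 1 (swGen ^ 7) = 0 := by
  rw [pow_succ, PowerSeries.coeff_mul, Finset.Nat.sum_antidiagonal_eq_sum_range_succ_mk]
  simp only [Finset.sum_range_succ, Finset.sum_range_zero, cp_6_0, cp_6_1]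
  norm_num [coeff_swGen]
  try ring

lemma cp_7_2 : PowerSeries.coeff 2 (swGen ^ 7) = 0 := by
  rw [pow_succ, PowerSeries.coeff_mul, Finset.Nat.sum_antidiagonal_eq_sum_range_succ_mk]
  simp only [Finset.sum_range_succ, Finset.sum_range_zero, cp_6_0, cp_6_1, cp_6_2]
  norm_num [coeff_swGen]
  try ring

lemma cp_7_3 : PowerSeries.coeff 3 (swGen ^ 7) = 0 := by
  rw [pow_succ, PowerSeries.coeff_mul, Finset.Nat.sum_antidiagonal_eq_sum_range_succ_mk]
  simp only [Finset.sum_range_succ, Finset.sum_range_zero, cp_6_0, cp_6_1, cp_6_2, cp_6_3]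
  norm_num [coeff_swGen]
  try ring

lemma cp_7_4 : PowerSeries.coeff 4 (swGen ^ 7) = 0 := by
  rw [pow_succ, PowerSeries.coeff_mul, Finset.Nat.sum_antidiagonal_eq_sum_range_succ_mk]
  simp only [Finset.sum_range_succ, Finset.sum_range_zero, cp_6_0, cp_6_1, cp_6_2, cp_6_3, cp_6_4]
  norm_num [coeff_swGen]
  try ring

lemma cp_7_5 : PowerSeries.coeff 5 (swGen ^ 7) = 0 := by
  rw [pow_succ, PowerSeries.coeff_mul, Finset.Nat.sum_antidiagonal_eq_sum_range_succ_mk]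
  simp only [Finset.sum_range_succ, Finset.sum_range_zero, cp_6_0, cp_6_1, cp_6_2, cp_6_3, cp_6_4, cp_6_5]
  norm_num [coeff_swGen]
  try ring

lemma cp_7_6 : PowerSeries.coeff 6 (swGen ^ 7) = 0 := by
  rw [pow_succ, PowerSeries.coeff_mul, Finset.Nat.sum_antidiagonal_eq_sum_range_succ_mk]
  simp only [Finset.sum_range_succ, Finset.sum_range_zero, cp_6_0, cp_6_1, cp_6_2, cp_6_3, cp_6_4, cp_6_5, cp_6_6]
  norm_num [coeff_swGen]
  try ring

lemma cp_7_7 : PowerSeries.coeff 7 (swGen ^ 7) = X 1 ^ 7 := by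
  rw [pow_succ, PowerSeries.coeff_mul, Finset.Nat.sum_antidiagonal_eq_sum_range_succ_mk]
  simp only [Finset.sum_range_succ, Finset.sum_range_zero, cp_6_0, cp_6_1, cp_6_2, cp_6_3, cp_6_4, cp_6_5, cp_6_6, cp_6_7]
  norm_num [coeff_swGen]
  try ring

lemma hsw0 : sw 0 = 1 := by
  rw [sw]
  norm_num [Finset.sum_range_succ, pow_zero, PowerSeries.coeff_one, Nat.factorial]

lemma hsw1 : sw 1 = X 1 := by
  rw [sw]
  simp only [Finset.sum_range_succ, Finset.sum_range_zero, cp_1_1, pow_zero, PowerSeries.coeff_one]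
  norm_num [Nat.factorial]

lemma hsw2 : (2 : MvPolynomial ℕ ℚ) * sw 2 = 2 * X 2 + X 1 ^ 2 := by
  rw [show ((2:MvPolynomial ℕ ℚ) * sw 2) = (2:ℚ) • sw 2 by
    rw [MvPolynomial.smul_eq_C_mul, map_ofNat]]
  rw [sw, Finset.smul_sum]
  simp only [Finset.sum_range_succ, Finset.sum_range_zero, cp_1_2, cp_2_2, pow_zero,
    PowerSeries.coeff_one, smul_smul]
  norm_num [Nat.factorial, MvPolynomial.smul_eq_C_mul, map_ofNat]
  try ring

lemma hsw3 : (6 : MvPolynomial ℕ ℚ) * sw 3 = 6 * X 3 + 6 * X 1 * X 2 + X 1 ^ 3 := by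
  rw [show ((6:MvPolynomial ℕ ℚ) * sw 3) = (6:ℚ) • sw 3 by
    rw [MvPolynomial.smul_eq_C_mul, map_ofNat]]
  rw [sw, Finset.smul_sum]
  simp only [Finset.sum_range_succ, Finset.sum_range_zero, cp_1_3, cp_2_3, cp_3_3, pow_zero,
    PowerSeries.coeff_one, smul_smul]
  norm_num [Nat.factorial, MvPolynomial.smul_eq_C_mul, map_ofNat]
  try ring

lemma hsw4 : (24 : MvPolynomial ℕ ℚ) * sw 4 = 24 * X 4 + 12 * X 2 ^ 2 + 24 * X 1 * X 3 + 12 * X 1 ^ 2 * X 2 + X 1 ^ 4 := by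
  rw [show ((24:MvPolynomial ℕ ℚ) * sw 4) = (24:ℚ) • sw 4 by
    rw [MvPolynomial.smul_eq_C_mul, map_ofNat]]
  rw [sw, Finset.smul_sum]
  simp only [Finset.sum_range_succ, Finset.sum_range_zero, cp_1_4, cp_2_4, cp_3_4, cp_4_4, pow_zero,
    PowerSeries.coeff_one, smul_smul]
  norm_num [Nat.factorial, MvPolynomial.smul_eq_C_mul, map_ofNat]
  try ring

lemma hsw5 : (120 : MvPolynomial ℕ ℚ) * sw 5 = 120 * X 5 + 120 * X 2 * X 3 + 120 * X 1 * X 4 + 60 * X 1 * X 2 ^ 2 + 60 * X 1 ^ 2 * X 3 + 20 * X 1 ^ 3 * X 2 + X 1 ^ 5 := by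
  rw [show ((120:MvPolynomial ℕ ℚ) * sw 5) = (120:ℚ) • sw 5 by
    rw [MvPolynomial.smul_eq_C_mul, map_ofNat]]
  rw [sw, Finset.smul_sum]
  simp only [Finset.sum_range_succ, Finset.sum_range_zero, cp_1_5, cp_2_5, cp_3_5, cp_4_5, cp_5_5, pow_zero,
    PowerSeries.coeff_one, smul_smul]
  norm_num [Nat.factorial, MvPolynomial.smul_eq_C_mul, map_ofNat]
  try ring

lemma hsw6 : (720 : MvPolynomial ℕ ℚ) * sw 6 = 720 * X 6 + 360 * X 3 ^ 2 + 720 * X 2 * X 4 + 120 * X 2 ^ 3 + 720 * X 1 * X 5 + 720 * X 1 * X 2 * X 3 + 360 * X 1 ^ 2 * X 4 + 180 * X 1 ^ 2 * X 2 ^ 2 + 120 * X 1 ^ 3 * X 3 + 30 * X 1 ^ 4 * X 2 + X 1 ^ 6 := by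
  rw [show ((720:MvPolynomial ℕ ℚ) * sw 6) = (720:ℚ) • sw 6 by
    rw [MvPolynomial.smul_eq_C_mul, map_ofNat]]
  rw [sw, Finset.smul_sum]
  simp only [Finset.sum_range_succ, Finset.sum_range_zero, cp_1_6, cp_2_6, cp_3_6, cp_4_6, cp_5_6, cp_6_6, pow_zero,
    PowerSeries.coeff_one, smul_smul]
  norm_num [Nat.factorial, MvPolynomial.smul_eq_C_mul, map_ofNat]
  try ring

lemma hsw7 : (5040 : MvPolynomial ℕ ℚ) * sw 7 = 5040 * X 7 + 5040 * X 3 * X 4 + 5040 * X 2 * X 5 + 2520 * X 2 ^ 2 * X 3 + 5040 * X 1 * X 6 + 2520 * X 1 * X 3 ^ 2 + 5040 * X 1 * X 2 * X 4 + 840 * X 1 * X 2 ^ 3 + 2520 * X 1 ^ 2 * X 5 + 2520 * X 1 ^ 2 * X 2 * X 3 + 840 * X 1 ^ 3 * X 4 + 420 * X 1 ^ 3 * X 2 ^ 2 + 210 * X 1 ^ 4 * X 3 + 42 * X 1 ^ 5 * X 2 + X 1 ^ 7 := by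
  rw [show ((5040:MvPolynomial ℕ ℚ) * sw 7) = (5040:ℚ) • sw 7 by
    rw [MvPolynomial.smul_eq_C_mul, map_ofNat]]
  rw [sw, Finset.smul_sum]
  simp only [Finset.sum_range_succ, Finset.sum_range_zero, cp_1_7, cp_2_7, cp_3_7, cp_4_7, cp_5_7, cp_6_7, cp_7_7, pow_zero,
    PowerSeries.coeff_one, smul_smul]
  norm_num [Nat.factorial, MvPolynomial.smul_eq_C_mul, map_ofNat]
  try ring

lemma h5040ne : (5040 : MvPolynomial ℕ ℚ) ≠ 0 := by
  rw [← map_ofNat (C : ℚ →+* MvPolynomial ℕ ℚ) 5040]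
  exact C_ne_zero.mpr (by norm_num)

lemma main_eq :
    (252 : ℚ) • swSchur ![4, 1, 1, 1] =
      (X 1 : MvPolynomial ℕ ℚ) ^ 7 + 21 * X 1 ^ 4 * X 3 - 84 * X 1 ^ 3 * X 2 ^ 2
        + 252 * X 2 ^ 2 * X 3 + 252 * X 1 * X 3 ^ 2 - 252 * X 7 := by
  rw [smul_eq_C_mul, map_ofNat]
  apply mul_left_cancel₀ h5040ne
  have hM : (Matrix.of fun i j : Fin 4 =>
      swZ (((![4,1,1,1] : Fin 4 → ℕ) i : ℤ) + (j : ℕ) - (i : ℕ))) =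
      Matrix.of !![sw 4, sw 5, sw 6, sw 7; sw 0, sw 1, sw 2, sw 3;
        0, sw 0, sw 1, sw 2; 0, 0, sw 0, sw 1] := by
    ext i j
    fin_cases i <;> fin_cases j <;> rfl
  have hD : Matrix.det (Matrix.of !![sw 4, sw 5, sw 6, sw 7; sw 0, sw 1, sw 2, sw 3;
      0, sw 0, sw 1, sw 2; 0, 0, sw 0, sw 1]) =
      sw 4 * sw 1 ^ 3 - 2 * sw 4 * sw 2 * sw 0 * sw 1 + sw 4 * sw 3 * sw 0 ^ 2
        - sw 5 * sw 0 * sw 1 ^ 2 + sw 5 * sw 2 * sw 0 ^ 2 + sw 6 * sw 0 ^ 2 * sw 1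
        - sw 7 * sw 0 ^ 3 := by
    rw [show ∀ {R : Type} (M : Matrix (Fin 4) (Fin 4) R), Matrix.of M = M from fun _ => rfl]
    simp (config := { decide := true }) [Matrix.det_succ_row_zero, Fin.sum_univ_succ,
      Fin.succAbove]
    ring
  rw [swSchur, hM, hD, hsw0, hsw1]
  have h42 := congrArg₂ (· * ·) hsw4 hsw2
  have h43 := congrArg₂ (· * ·) hsw4 hsw3
  have h52 := congrArg₂ (· * ·) hsw5 hsw2
  linear_combination (52920 * X 1 ^ 3) * hsw4 - (52920 * X 1) * h42
    + 8820 * h43 - (10584 * X 1 ^ 2) * hsw5 + 5292 * h52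
    + (1764 * X 1) * hsw6 - 252 * hsw7


open MvPolynomial in
/-- `252 σ_{(4,1,1,1)} = x₁⁷ + 21 x₁⁴ x₃ − 84 x₁³ x₂² + 252 x₂² x₃
+ 252 x₁ x₃² − 252 x₇`; in particular `σ_{(4,1,1,1)}` depends only on
`x₁, x₂, x₃, x₇`. -/
theorem stmt_15 :
    (252 : ℚ) • swSchur ![4, 1, 1, 1] =
      (X 1 : MvPolynomial ℕ ℚ) ^ 7 + 21 * X 1 ^ 4 * X 3 - 84 * X 1 ^ 3 * X 2 ^ 2
        + 252 * X 2 ^ 2 * X 3 + 252 * X 1 * X 3 ^ 2 - 252 * X 7 ∧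
    (swSchur ![4, 1, 1, 1]).vars ⊆ ({1, 2, 3, 7} : Finset ℕ) := by
  refine ⟨main_eq, ?_⟩
  have h := main_eq
  rw [smul_eq_C_mul] at h
  have hσ : swSchur ![4, 1, 1, 1] = C ((252 : ℚ)⁻¹) *
      ((X 1 : MvPolynomial ℕ ℚ) ^ 7 + 21 * X 1 ^ 4 * X 3 - 84 * X 1 ^ 3 * X 2 ^ 2
        + 252 * X 2 ^ 2 * X 3 + 252 * X 1 * X 3 ^ 2 - 252 * X 7) := by
    rw [← h, ← mul_assoc, ← C_mul]
    norm_num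
  rw [hσ, vars_C_mul _ (by norm_num)]
  have hP : ((X 1 : MvPolynomial ℕ ℚ) ^ 7 + 21 * X 1 ^ 4 * X 3 - 84 * X 1 ^ 3 * X 2 ^ 2
      + 252 * X 2 ^ 2 * X 3 + 252 * X 1 * X 3 ^ 2 - 252 * X 7) ∈
      supported ℚ (↑({1, 2, 3, 7} : Finset ℕ) : Set ℕ) := by
    have hx1 : (X 1 : MvPolynomial ℕ ℚ) ∈ supported ℚ (↑({1, 2, 3, 7} : Finset ℕ) : Set ℕ) :=
      X_mem_supported.mpr (by simp)
    have hx2 : (X 2 : MvPolynomial ℕ ℚ) ∈ supported ℚ (↑({1, 2, 3, 7} : Finset ℕ) : Set ℕ) :=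
      X_mem_supported.mpr (by simp)
    have hx3 : (X 3 : MvPolynomial ℕ ℚ) ∈ supported ℚ (↑({1, 2, 3, 7} : Finset ℕ) : Set ℕ) :=
      X_mem_supported.mpr (by simp)
    have hx7 : (X 7 : MvPolynomial ℕ ℚ) ∈ supported ℚ (↑({1, 2, 3, 7} : Finset ℕ) : Set ℕ) :=
      X_mem_supported.mpr (by simp)
    exact sub_mem (add_mem (add_mem (sub_mem (add_mem (pow_mem hx1 7)
      (mul_mem (mul_mem (ofNat_mem _ 21) (pow_mem hx1 4)) hx3))
      (mul_mem (mul_mem (ofNat_mem _ 84) (pow_mem hx1 3)) (pow_mem hx2 2)))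
      (mul_mem (mul_mem (ofNat_mem _ 252) (pow_mem hx2 2)) hx3))
      (mul_mem (mul_mem (ofNat_mem _ 252) hx1) (pow_mem hx3 2)))
      (mul_mem (ofNat_mem _ 252) hx7)
  exact Finset.coe_subset.mp (mem_supported.mp hP)
end
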